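/- For every n ≥ 1 and every constant R > 0 there exists a constant C₁ = C₁(n,R) > 0 such that for all t ≥ 0, ∫_{|x| ≤ t+R} ψ(x,t) dx ≤ C₁ (t+1)^{(n−1)/2}, where the integral is over the ball {x ∈ ℝⁿ : |x| ≤ t+R}. -/

import Mathlib

open MeasureTheory Real Set

noncomputable section

/-- The Laplacian, as the sum of pure second derivatives in the coordinate directions. -/
def lap {n : ℕ} (u : EuclideanSpace ℝ (Fin n) → ℝ) (x : EuclideanSpace ℝ (Fin n)) : ℝ :=
  ∑ i : Fin n, iteratedDeriv 2 (fun s : ℝ => u (x + s • EuclideanSpace.single i (1 : ℝ))) 0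

/-- The Yordanov–Zhang function `φ₁`:
`φ₁(x) = ∫_{S^{n-1}} e^{x·ω} dS_ω` for `n ≥ 2`, and `φ₁(x) = e^x + e^{-x}` for `n = 1`. -/
def phi1 (n : ℕ) (x : EuclideanSpace ℝ (Fin n)) : ℝ :=
  if n = 1 then Real.exp (∑ i, x i) + Real.exp (-∑ i, x i)
  else ∫ ω : Metric.sphere (0 : EuclideanSpace ℝ (Fin n)) 1,
      Real.exp ((inner ℝ x (ω : EuclideanSpace ℝ (Fin n)) : ℝ))
    ∂((volume : Measure (EuclideanSpace ℝ (Fin n))).toSphere)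

/-- The Yordanov–Zhang test function `ψ(x,t) = e^{-t} φ₁(x)`. -/
def psi (n : ℕ) (x : EuclideanSpace ℝ (Fin n)) (t : ℝ) : ℝ :=
  Real.exp (-t) * phi1 n x

namespace PsiAux

lemma integrableOn_exp_half (r : ℝ) :
    IntegrableOn (fun s : ℝ => Real.exp ((s - r) / 2)) (Iic r) := by
  have h2 : IntegrableOn (fun x : ℝ => Real.exp (-r / 2) * Real.exp (-(2⁻¹) * x))
      (Ici (-r)) := by
    rw [integrableOn_Ici_iff_integrableOn_Ioi]
    exact (exp_neg_integrableOn_Ioi (-r) (by norm_num)).const_mul _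
  have h3 := (MeasurePreserving.integrableOn_comp_preimage
    (Measure.measurePreserving_neg (volume : Measure ℝ))
    (Homeomorph.neg ℝ).measurableEmbedding).2 h2
  have e1 : (Neg.neg : ℝ → ℝ) ⁻¹' (Ici (-r)) = Iic r := by
    ext x; simp
  rw [e1] at h3
  refine h3.congr_fun (fun s _ => ?_) measurableSet_Iic
  show Real.exp (-r / 2) * Real.exp (-(2⁻¹) * (-s)) = Real.exp ((s - r) / 2)
  rw [← Real.exp_add]; ring_nf

lemma integral_exp_half (r : ℝ) : ∫ s in Iic r, Real.exp ((s - r) / 2) = 2 := by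
  have hF : ∀ s ∈ Iic r, HasDerivAt (fun u : ℝ => 2 * Real.exp ((u - r) / 2))
      (Real.exp ((s - r) / 2)) s := by
    intro s _
    have h1 : HasDerivAt (fun u : ℝ => (u - r) / 2) (2⁻¹) s := by
      simpa using ((hasDerivAt_id s).sub_const r).div_const 2
    have h2 := (h1.exp).const_mul (2 : ℝ)
    refine h2.congr_deriv ?_
    rw [mul_comm]
    ring
  have htend : Filter.Tendsto (fun u : ℝ => 2 * Real.exp ((u - r) / 2))
      Filter.atBot (nhds 0) := by
    have h1 : Filter.Tendsto (fun u : ℝ => (u - r) / 2) Filter.atBot Filter.atBot := by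
      apply Filter.Tendsto.atBot_div_const (by norm_num : (0:ℝ) < 2)
      simpa [sub_eq_add_neg] using Filter.tendsto_atBot_add_const_right Filter.atBot (-r) Filter.tendsto_id
    have h2 := Real.tendsto_exp_atBot.comp h1
    have h3 := h2.const_mul (2 : ℝ)
    simpa using h3
  have := integral_Iic_of_hasDerivAt_of_tendsto' hF (integrableOn_exp_half r) htend
  simpa using this

lemma key {m : ℕ} {r : ℝ} (hr : 0 < r) (ω : EuclideanSpace ℝ (Fin (m + 1)))
    (hω : ‖ω‖ = 1) :
    ∫ x in Metric.closedBall (0 : EuclideanSpace ℝ (Fin (m + 1))) r,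
        Real.exp ((inner ℝ x ω : ℝ))
      ≤ 2 * Real.exp r * Real.sqrt (4 * π * r) ^ m := by
  classical
  -- orthonormal basis with `b 0 = ω`
  have hcard : Module.finrank ℝ (EuclideanSpace ℝ (Fin (m + 1)))
      = Fintype.card (Fin (m + 1)) := by
    simp [finrank_euclideanSpace]
  have horth : Orthonormal ℝ (Set.restrict ({0} : Set (Fin (m + 1))) (fun _ => ω)) := by
    constructor
    · intro i; exact hω
    · intro i j hij
      exact absurd (Subtype.ext ((Set.mem_singleton_iff.mp i.2).trans
        (Set.mem_singleton_iff.mp j.2).symm)) hij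
  obtain ⟨b, hb⟩ := horth.exists_orthonormalBasis_extension_of_card_eq hcard
  have hb0 : b 0 = ω := hb 0 rfl
  set A := b.repr.symm with hA
  have hmp : MeasurePreserving A volume volume := b.measurePreserving_repr_symm
  have hemb : MeasurableEmbedding A := A.toHomeomorph.measurableEmbedding
  have hpre : ⇑A ⁻¹' (Metric.closedBall 0 r) = Metric.closedBall 0 r := by
    ext y
    simp [Metric.mem_closedBall, dist_zero_right]
  have hchg : ∫ x in Metric.closedBall (0 : EuclideanSpace ℝ (Fin (m + 1))) r,
        Real.exp ((inner ℝ x ω : ℝ))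
      = ∫ y in Metric.closedBall (0 : EuclideanSpace ℝ (Fin (m + 1))) r,
        Real.exp (y 0) := by
    rw [← hmp.setIntegral_preimage_emb hemb
      (fun x => Real.exp ((inner ℝ x ω : ℝ))) (Metric.closedBall 0 r), hpre]
    refine setIntegral_congr_fun measurableSet_closedBall fun y _ => ?_
    congr 1
    calc (inner ℝ (A y) ω : ℝ)
        = (inner ℝ (A y) (A (EuclideanSpace.single 0 (1 : ℝ))) : ℝ) := by
          rw [hA, OrthonormalBasis.repr_symm_single, hb0]
      _ = (inner ℝ y (EuclideanSpace.single 0 (1 : ℝ)) : ℝ) := A.inner_map_map _ _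
      _ = y 0 := by
          rw [EuclideanSpace.inner_single_right]; simp
  rw [hchg]
  -- the comparison function
  set g : Fin (m + 1) → ℝ → ℝ := fun i s =>
    if i = 0 then (Set.Iic r).indicator (fun u => Real.exp ((u - r) / 2)) s
    else Real.exp (-(4 * r)⁻¹ * s ^ 2) with hg
  have hgint : ∀ i, Integrable (g i) := by
    intro i
    by_cases hi : i = 0
    · have hgi : g i = (Set.Iic r).indicator (fun u => Real.exp ((u - r) / 2)) := by
        funext s; simp [hg, hi]
      rw [hgi, integrable_indicator_iff measurableSet_Iic]
      exact integrableOn_exp_half r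
    · simp only [hg, if_neg hi]
      exact integrable_exp_neg_mul_sq (by positivity)
  have hgnn : ∀ i s, 0 ≤ g i s := by
    intro i s
    by_cases hi : i = 0
    · simp only [hg, hi, if_pos]
      exact Set.indicator_nonneg (fun u _ => (Real.exp_pos _).le) s
    · simp only [hg, if_neg hi]
      exact (Real.exp_pos _).le
  -- pointwise bound on the ball
  have hpoint : ∀ y : EuclideanSpace ℝ (Fin (m + 1)),
      y ∈ Metric.closedBall (0 : EuclideanSpace ℝ (Fin (m + 1))) r →
      Real.exp (y 0) ≤ Real.exp r * ∏ i, g i (y i) := by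
    intro y hy
    have hnorm : ‖y‖ ≤ r := by simpa using hy
    have hsum : ∑ i, (y i) ^ 2 ≤ r ^ 2 := by
      have h1 : ‖y‖ ^ 2 ≤ r ^ 2 := by
        apply pow_le_pow_left₀ (norm_nonneg y) hnorm
      rw [EuclideanSpace.norm_eq] at h1
      rw [Real.sq_sqrt (by positivity)] at h1
      simpa [sq_abs] using h1
    have hsplit : (y 0) ^ 2 + ∑ i ∈ Finset.univ.erase (0 : Fin (m + 1)), (y i) ^ 2 = ∑ i, (y i) ^ 2 := by
      exact Finset.add_sum_erase Finset.univ (fun i => (y i) ^ 2) (Finset.mem_univ (0 : Fin (m + 1)))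
    have hSnn : 0 ≤ ∑ i ∈ Finset.univ.erase (0 : Fin (m + 1)), (y i) ^ 2 :=
      Finset.sum_nonneg fun i _ => sq_nonneg _
    have hy0 : y 0 ≤ r := by nlinarith [sq_nonneg (y 0 - r), sq_nonneg (y 0 + r)]
    have h0 : g 0 (y 0) = Real.exp ((y 0 - r) / 2) := by
      simp only [hg, if_pos rfl]
      exact Set.indicator_of_mem (Set.mem_Iic.mpr hy0) _
    have hrest : ∏ i ∈ Finset.univ.erase (0 : Fin (m + 1)), g i (y i)
        = Real.exp (∑ i ∈ Finset.univ.erase (0 : Fin (m + 1)), (-(4 * r)⁻¹ * (y i) ^ 2)) := by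
      rw [Real.exp_sum]
      refine Finset.prod_congr rfl fun i hi => ?_
      simp only [hg, if_neg (Finset.ne_of_mem_erase hi)]
    rw [← Finset.mul_prod_erase Finset.univ _ (Finset.mem_univ (0 : Fin (m + 1))), h0, hrest,
      ← Real.exp_add, ← Real.exp_add]
    apply Real.exp_le_exp.mpr
    rw [← Finset.mul_sum]
    set S := ∑ i ∈ Finset.univ.erase (0 : Fin (m + 1)), (y i) ^ 2
    have hkey : (4 * r)⁻¹ * S ≤ (r - y 0) / 2 := by
      rw [inv_mul_le_iff₀ (by positivity)]
      nlinarith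
    linarith
  -- integrability of the comparison function
  have e := EuclideanSpace.volume_preserving_symm_measurableEquiv_toLp (Fin (m + 1))
  have hsymm : MeasurePreserving (MeasurableEquiv.toLp 2 ((Fin (m + 1)) → ℝ))
      volume volume := e.symm
  have hcompeq : ∀ z : (Fin (m + 1)) → ℝ,
      (fun y : EuclideanSpace ℝ (Fin (m + 1)) => ∏ i, g i (y i))
        ((MeasurableEquiv.toLp 2 ((Fin (m + 1)) → ℝ)) z) = ∏ i, g i (z i) := by
    intro z; rfl
  have hGint : Integrable (fun y : EuclideanSpace ℝ (Fin (m + 1)) => ∏ i, g i (y i)) := by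
    rw [← hsymm.integrable_comp_emb (MeasurableEquiv.measurableEmbedding _)]
    have : ((fun y : EuclideanSpace ℝ (Fin (m + 1)) => ∏ i, g i (y i)) ∘
        (MeasurableEquiv.toLp 2 ((Fin (m + 1)) → ℝ)))
        = fun z : (Fin (m + 1)) → ℝ => ∏ i, g i (z i) := by
      funext z; exact hcompeq z
    rw [this]
    exact Integrable.fintype_prod_dep hgint
  have hGval : ∫ y : EuclideanSpace ℝ (Fin (m + 1)), ∏ i, g i (y i)
      = 2 * Real.sqrt (4 * π * r) ^ m := by
    rw [← hsymm.integral_comp (MeasurableEquiv.measurableEmbedding _)]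
    have : (fun z : (Fin (m + 1)) → ℝ =>
        (fun y : EuclideanSpace ℝ (Fin (m + 1)) => ∏ i, g i (y i))
        ((MeasurableEquiv.toLp 2 ((Fin (m + 1)) → ℝ)) z))
        = fun z : (Fin (m + 1)) → ℝ => ∏ i, g i (z i) := by
      funext z; exact hcompeq z
    rw [this, MeasureTheory.integral_fintype_prod_volume_eq_prod g]
    have h0 : ∫ s : ℝ, g 0 s = 2 := by
      simp only [hg, if_pos rfl]
      rw [MeasureTheory.integral_indicator measurableSet_Iic]
      exact integral_exp_half r
    have hi : ∀ i : Fin (m + 1), i ≠ 0 → ∫ s : ℝ, g i s = Real.sqrt (4 * π * r) := by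
      intro i hi
      simp only [hg, if_neg hi]
      rw [integral_gaussian]
      congr 1
      field_simp
    rw [← Finset.mul_prod_erase Finset.univ _ (Finset.mem_univ (0 : Fin (m + 1))), h0]
    congr 1
    rw [Finset.prod_congr rfl fun i hmem => hi i (Finset.ne_of_mem_erase hmem),
      Finset.prod_const, Finset.card_erase_of_mem (Finset.mem_univ (0 : Fin (m + 1))), Finset.card_univ,
      Fintype.card_fin]
    norm_num
  -- put things together
  have hball : IntegrableOn (fun y : EuclideanSpace ℝ (Fin (m + 1)) => Real.exp (y 0))
      (Metric.closedBall 0 r) := by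
    apply ContinuousOn.integrableOn_compact (isCompact_closedBall _ _)
    apply Continuous.continuousOn
    have hc : Continuous fun y : EuclideanSpace ℝ (Fin (m + 1)) =>
        (inner ℝ y (EuclideanSpace.single 0 (1:ℝ)) : ℝ) :=
      continuous_id.inner continuous_const
    have : Continuous fun y : EuclideanSpace ℝ (Fin (m + 1)) => y 0 := by
      have : (fun y : EuclideanSpace ℝ (Fin (m + 1)) => y 0)
          = fun y : EuclideanSpace ℝ (Fin (m + 1)) =>
            (inner ℝ y (EuclideanSpace.single 0 (1:ℝ)) : ℝ) := by
        funext y; rw [EuclideanSpace.inner_single_right]; simp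
      rw [this]; exact hc
    exact Real.continuous_exp.comp this
  calc ∫ y in Metric.closedBall (0 : EuclideanSpace ℝ (Fin (m + 1))) r, Real.exp (y 0)
      ≤ ∫ y in Metric.closedBall (0 : EuclideanSpace ℝ (Fin (m + 1))) r,
          Real.exp r * ∏ i, g i (y i) := by
        refine setIntegral_mono_on hball ((hGint.const_mul _).integrableOn)
          measurableSet_closedBall hpoint
    _ ≤ ∫ y : EuclideanSpace ℝ (Fin (m + 1)), Real.exp r * ∏ i, g i (y i) := by
        apply setIntegral_le_integral (hGint.const_mul _)
        filter_upwards with y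
        have : 0 ≤ ∏ i, g i (y i) := Finset.prod_nonneg fun i _ => hgnn i (y i)
        positivity
    _ = 2 * Real.exp r * Real.sqrt (4 * π * r) ^ m := by
        rw [MeasureTheory.integral_const_mul, hGval]; ring

end PsiAux

/-- For every `n ≥ 1` and `R > 0` there is `C₁ = C₁(n,R) > 0` such that
`∫_{|x| ≤ t+R} ψ(x,t) dx ≤ C₁ (t+1)^{(n-1)/2}` for all `t ≥ 0`. -/
theorem psi_ball_integral_bound {n : ℕ} (hn : 1 ≤ n) {R : ℝ} (hR : 0 < R) :
    ∃ C₁ > (0 : ℝ), ∀ t : ℝ, 0 ≤ t →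
      (∫ x in Metric.closedBall (0 : EuclideanSpace ℝ (Fin n)) (t + R), psi n x t)
        ≤ C₁ * (t + 1) ^ (((n : ℝ) - 1) / 2) := by

  obtain ⟨m, rfl⟩ : ∃ m, n = m + 1 := ⟨n - 1, (Nat.succ_pred_eq_of_pos hn).symm⟩
  by_cases h1 : m = 0
  · subst h1
    refine ⟨4 * Real.exp R + 1, by positivity, fun t ht => ?_⟩
    have hr : 0 < t + R := by linarith
    set e₁ : EuclideanSpace ℝ (Fin (0 + 1)) := EuclideanSpace.single 0 (1 : ℝ) with he₁
    have hkey1 := PsiAux.key (m := 0) hr e₁ (by simp [he₁])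
    have hkey2 := PsiAux.key (m := 0) hr (-e₁) (by simp [he₁])
    have hphi : ∀ x : EuclideanSpace ℝ (Fin (0 + 1)), phi1 (0 + 1) x
        = Real.exp ((inner ℝ x e₁ : ℝ)) + Real.exp ((inner ℝ x (-e₁) : ℝ)) := by
      intro x
      rw [phi1, if_pos rfl]
      have hx : (inner ℝ x e₁ : ℝ) = ∑ i, x i := by
        rw [he₁, EuclideanSpace.inner_single_right]
        simp [Fin.sum_univ_one]
      rw [inner_neg_right, hx]
    have hint1 : IntegrableOn
        (fun x : EuclideanSpace ℝ (Fin (0 + 1)) => Real.exp ((inner ℝ x e₁ : ℝ)))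
        (Metric.closedBall 0 (t + R)) := by
      apply ContinuousOn.integrableOn_compact (isCompact_closedBall _ _)
      exact (Real.continuous_exp.comp (continuous_id.inner continuous_const)).continuousOn
    have hint2 : IntegrableOn
        (fun x : EuclideanSpace ℝ (Fin (0 + 1)) => Real.exp ((inner ℝ x (-e₁) : ℝ)))
        (Metric.closedBall 0 (t + R)) := by
      apply ContinuousOn.integrableOn_compact (isCompact_closedBall _ _)
      exact (Real.continuous_exp.comp (continuous_id.inner continuous_const)).continuousOn
    have hsplit : (∫ x in Metric.closedBall (0 : EuclideanSpace ℝ (Fin (0 + 1))) (t + R),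
        phi1 (0 + 1) x)
        = (∫ x in Metric.closedBall (0 : EuclideanSpace ℝ (Fin (0 + 1))) (t + R),
            Real.exp ((inner ℝ x e₁ : ℝ)))
          + ∫ x in Metric.closedBall (0 : EuclideanSpace ℝ (Fin (0 + 1))) (t + R),
            Real.exp ((inner ℝ x (-e₁) : ℝ)) := by
      rw [← integral_add hint1 hint2]
      exact integral_congr_ae (Filter.Eventually.of_forall fun x => hphi x)
    have hbound : (∫ x in Metric.closedBall (0 : EuclideanSpace ℝ (Fin (0 + 1))) (t + R),
        phi1 (0 + 1) x) ≤ 4 * Real.exp (t + R) := by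
      rw [hsplit]
      have := hkey1
      have := hkey2
      simp only [pow_zero, mul_one] at hkey1 hkey2
      linarith
    have hexp : ((((0 + 1 : ℕ) : ℝ)) - 1) / 2 = 0 := by norm_num
    rw [hexp, Real.rpow_zero, mul_one]
    have : (∫ x in Metric.closedBall (0 : EuclideanSpace ℝ (Fin (0 + 1))) (t + R),
        psi (0 + 1) x t)
        = Real.exp (-t) * ∫ x in Metric.closedBall (0 : EuclideanSpace ℝ (Fin (0 + 1))) (t + R),
          phi1 (0 + 1) x := by
      simp_rw [psi]
      exact MeasureTheory.integral_const_mul _ _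
    rw [this]
    have h4 : Real.exp (-t) * (4 * Real.exp (t + R)) = 4 * Real.exp R := by
      rw [show Real.exp (-t) * (4 * Real.exp (t + R)) = 4 * (Real.exp (-t) * Real.exp (t + R))
        from by ring, ← Real.exp_add]
      ring_nf
    nlinarith [mul_le_mul_of_nonneg_left hbound (Real.exp_pos (-t)).le, Real.exp_pos (-t)]
  · have hne : m + 1 ≠ 1 := by omega
    set σ := (volume : Measure (EuclideanSpace ℝ (Fin (m + 1)))).toSphere with hσ
    set K := (σ Set.univ).toReal with hK
    have hK0 : 0 ≤ K := ENNReal.toReal_nonneg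
    refine ⟨K * 2 * Real.exp R * Real.sqrt (4 * π * (R + 1)) ^ m + 1, by positivity,
      fun t ht => ?_⟩
    have hr : 0 < t + R := by linarith
    set B := Metric.closedBall (0 : EuclideanSpace ℝ (Fin (m + 1))) (t + R) with hB
    haveI hfin : IsFiniteMeasure
        ((volume : Measure (EuclideanSpace ℝ (Fin (m + 1)))).restrict B) :=
      ⟨by rw [Measure.restrict_apply_univ]; exact measure_closedBall_lt_top⟩
    have hcont : Continuous fun p :
        EuclideanSpace ℝ (Fin (m + 1)) × Metric.sphere (0 : EuclideanSpace ℝ (Fin (m + 1))) 1 =>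
        Real.exp ((inner ℝ p.1 (p.2 : EuclideanSpace ℝ (Fin (m + 1))) : ℝ)) :=
      Real.continuous_exp.comp
        (continuous_fst.inner (continuous_subtype_val.comp continuous_snd))
    have hIntProd : Integrable
        (Function.uncurry fun (x : EuclideanSpace ℝ (Fin (m + 1)))
          (ω : Metric.sphere (0 : EuclideanSpace ℝ (Fin (m + 1))) 1) =>
          Real.exp ((inner ℝ x (ω : EuclideanSpace ℝ (Fin (m + 1))) : ℝ)))
        ((((volume : Measure (EuclideanSpace ℝ (Fin (m + 1)))).restrict B)).prod σ) := by
      refine Integrable.mono' (integrable_const (Real.exp (t + R)))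
        hcont.aestronglyMeasurable ?_
      rw [Measure.restrict_prod_eq_prod_univ]
      filter_upwards [ae_restrict_mem (measurableSet_closedBall.prod MeasurableSet.univ)]
        with p hp
      have h1 : ‖p.1‖ ≤ t + R := by
        have := hp.1
        simpa [hB, Metric.mem_closedBall, dist_zero_right] using this
      have h2 : ‖(p.2 : EuclideanSpace ℝ (Fin (m + 1)))‖ = 1 :=
        mem_sphere_zero_iff_norm.mp p.2.2
      show ‖Real.exp ((inner ℝ p.1 (p.2 : EuclideanSpace ℝ (Fin (m + 1))) : ℝ))‖
        ≤ Real.exp (t + R)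
      rw [Real.norm_eq_abs, abs_of_pos (Real.exp_pos _)]
      apply Real.exp_le_exp.mpr
      calc (inner ℝ p.1 (p.2 : EuclideanSpace ℝ (Fin (m + 1))) : ℝ)
          ≤ ‖p.1‖ * ‖(p.2 : EuclideanSpace ℝ (Fin (m + 1)))‖ := real_inner_le_norm _ _
        _ ≤ t + R := by rw [h2, mul_one]; exact h1
    have hswap := MeasureTheory.integral_integral_swap hIntProd
    have hphi : (∫ x in B, phi1 (m + 1) x)
        = ∫ ω, (∫ x in B,
            Real.exp ((inner ℝ x (ω : EuclideanSpace ℝ (Fin (m + 1))) : ℝ))) ∂σ := by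
      calc (∫ x in B, phi1 (m + 1) x)
          = ∫ x in B, ∫ ω,
              Real.exp ((inner ℝ x (ω : EuclideanSpace ℝ (Fin (m + 1))) : ℝ)) ∂σ := by
            simp only [phi1, if_neg hne, hσ]
        _ = _ := hswap
    have hbound : (∫ x in B, phi1 (m + 1) x)
        ≤ K * (2 * Real.exp (t + R) * Real.sqrt (4 * π * (t + R)) ^ m) := by
      rw [hphi]
      calc (∫ ω, (∫ x in B,
            Real.exp ((inner ℝ x (ω : EuclideanSpace ℝ (Fin (m + 1))) : ℝ))) ∂σ)
          ≤ ∫ _ω, 2 * Real.exp (t + R) * Real.sqrt (4 * π * (t + R)) ^ m ∂σ := by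
            refine integral_mono_of_nonneg ?_ (integrable_const _) ?_
            · filter_upwards with ω
              exact integral_nonneg fun x => (Real.exp_pos _).le
            · filter_upwards with ω
              exact PsiAux.key hr (ω : EuclideanSpace ℝ (Fin (m + 1)))
                (mem_sphere_zero_iff_norm.mp ω.2)
        _ = K * (2 * Real.exp (t + R) * Real.sqrt (4 * π * (t + R)) ^ m) := by
            rw [integral_const, smul_eq_mul, measureReal_def]
    have hpsi : (∫ x in B, psi (m + 1) x t)
        = Real.exp (-t) * ∫ x in B, phi1 (m + 1) x := by
      simp_rw [psi]
      exact MeasureTheory.integral_const_mul _ _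
    rw [hpsi]
    have hexp : ((((m + 1 : ℕ) : ℝ)) - 1) / 2 = (m : ℝ) / 2 := by push_cast; ring
    rw [hexp]
    have hsq : Real.sqrt (4 * π * (t + R)) ^ m
        ≤ Real.sqrt (4 * π * (R + 1)) ^ m * (t + 1) ^ ((m : ℝ) / 2) := by
      have h1 : Real.sqrt (4 * π * (t + R)) ≤ Real.sqrt (4 * π * (R + 1)) * Real.sqrt (t + 1) := by
        rw [← Real.sqrt_mul (by positivity)]
        apply Real.sqrt_le_sqrt
        nlinarith [Real.pi_pos, mul_nonneg hR.le ht]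
      have h2 : Real.sqrt (t + 1) ^ m = (t + 1) ^ ((m : ℝ) / 2) := by
        rw [Real.sqrt_eq_rpow, ← Real.rpow_natCast ((t + 1) ^ ((1 : ℝ) / 2)) m,
          ← Real.rpow_mul (by linarith : (0 : ℝ) ≤ t + 1)]
        congr 1
        ring
      calc Real.sqrt (4 * π * (t + R)) ^ m
          ≤ (Real.sqrt (4 * π * (R + 1)) * Real.sqrt (t + 1)) ^ m :=
            pow_le_pow_left₀ (Real.sqrt_nonneg _) h1 m
        _ = Real.sqrt (4 * π * (R + 1)) ^ m * Real.sqrt (t + 1) ^ m := mul_pow _ _ _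
        _ = Real.sqrt (4 * π * (R + 1)) ^ m * (t + 1) ^ ((m : ℝ) / 2) := by rw [h2]
    have hP : (0 : ℝ) ≤ (t + 1) ^ ((m : ℝ) / 2) := Real.rpow_nonneg (by linarith) _
    calc Real.exp (-t) * ∫ x in B, phi1 (m + 1) x
        ≤ Real.exp (-t) * (K * (2 * Real.exp (t + R) * Real.sqrt (4 * π * (t + R)) ^ m)) :=
          mul_le_mul_of_nonneg_left hbound (Real.exp_pos _).le
      _ = K * 2 * Real.exp R * Real.sqrt (4 * π * (t + R)) ^ m := by
          rw [show Real.exp (-t) * (K * (2 * Real.exp (t + R) * Real.sqrt (4 * π * (t + R)) ^ m))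
            = K * 2 * (Real.exp (-t) * Real.exp (t + R)) * Real.sqrt (4 * π * (t + R)) ^ m
            from by ring, ← Real.exp_add]
          ring_nf
      _ ≤ K * 2 * Real.exp R
          * (Real.sqrt (4 * π * (R + 1)) ^ m * (t + 1) ^ ((m : ℝ) / 2)) :=
          mul_le_mul_of_nonneg_left hsq (by positivity)
      _ ≤ (K * 2 * Real.exp R * Real.sqrt (4 * π * (R + 1)) ^ m + 1)
          * (t + 1) ^ ((m : ℝ) / 2) := by
          rw [show K * 2 * Real.exp R
              * (Real.sqrt (4 * π * (R + 1)) ^ m * (t + 1) ^ ((m : ℝ) / 2))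
              = (K * 2 * Real.exp R * Real.sqrt (4 * π * (R + 1)) ^ m)
                * (t + 1) ^ ((m : ℝ) / 2) from by ring]
          exact mul_le_mul_of_nonneg_right (by linarith) hP
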